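/- Mutual information upper-bounds the log fractional packing value at a fixed input distribution: for any probability distribution p on A, I(E,p) ≥ log α*(E,p), where α*(E,p) := 1 / max_y ∑_{x : E(y|x) > 0} p(x). -/

import Mathlib

/-- Mutual information upper-bounds the log fractional packing
value at a fixed input distribution:
`I(E,p) ≥ log α*(E,p)` where `α*(E,p) = 1 / max_y ∑_{x : E(y|x)>0} p(x)`. -/
theorem stmt17 {A B : Type*} [Fintype A] [Fintype B] [Nonempty A] [Nonempty B]
    (E : A → B → ℝ) (hEpos : ∀ x y, 0 ≤ E x y) (hEsum : ∀ x, ∑ y, E x y = 1)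
    (p : A → ℝ) (hp0 : ∀ x, 0 ≤ p x) (hp1 : ∑ x, p x = 1)
    (q : B → ℝ) (hq : ∀ y, q y = ∑ x, E x y * p x) :
    Real.logb 2 (1 / ⨆ y : B, ∑ x, (if 0 < E x y then p x else 0))
      ≤ ∑ x, ∑ y, p x * E x y * Real.logb 2 (E x y / q y) := by
  set S : B → ℝ := fun y => ∑ x, (if 0 < E x y then p x else 0) with hS
  set M : ℝ := ⨆ y : B, S y with hM
  have hq0 : ∀ y, 0 ≤ q y := fun y => by
    rw [hq]; exact Finset.sum_nonneg fun x _ => mul_nonneg (hEpos x y) (hp0 x)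
  have hSle : ∀ y, S y ≤ M := fun y =>
    le_ciSup (Set.Finite.bddAbove (Set.finite_range S)) y
  obtain ⟨x0, hx0⟩ : ∃ x, 0 < p x := by
    by_contra h
    push_neg at h
    have h0 : ∑ x, p x = 0 :=
      Finset.sum_eq_zero fun x _ => le_antisymm (h x) (hp0 x)
    rw [hp1] at h0; norm_num at h0
  obtain ⟨y0, hy0⟩ : ∃ y, 0 < E x0 y := by
    by_contra h
    push_neg at h
    have h0 : ∑ y, E x0 y = 0 :=
      Finset.sum_eq_zero fun y _ => le_antisymm (h y) (hEpos x0 y)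
    rw [hEsum] at h0; norm_num at h0
  have hSy0 : p x0 ≤ S y0 := by
    have := Finset.single_le_sum
      (f := fun x => if 0 < E x y0 then p x else 0)
      (fun i _ => by by_cases h : 0 < E i y0 <;> simp [h, hp0 i]) (Finset.mem_univ x0)
    simpa [hy0] using this
  have hM0 : 0 < M := lt_of_lt_of_le (lt_of_lt_of_le hx0 hSy0) (hSle y0)
  have hlog2 : (0:ℝ) < Real.log 2 := Real.log_pos one_lt_two
  -- key pointwise inequality
  have key : ∀ x y,
      p x * E x y * Real.logb 2 (1/M)
        + (p x * E x y - (if 0 < E x y then p x * q y / M else 0)) / Real.log 2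
      ≤ p x * E x y * Real.logb 2 (E x y / q y) := by
    intro x y
    by_cases hE : 0 < E x y
    · by_cases hpx : 0 < p x
      · -- main case
        have hqy : 0 < q y := by
          rw [hq]
          have := Finset.single_le_sum
            (f := fun x' => E x' y * p x')
            (fun i _ => mul_nonneg (hEpos i y) (hp0 i)) (Finset.mem_univ x)
          exact lt_of_lt_of_le (mul_pos hE hpx) this
        have ht : 0 < E x y * M / q y := by positivity
        have hlog : 1 - (E x y * M / q y)⁻¹ ≤ Real.log (E x y * M / q y) :=
          Real.one_sub_inv_le_log_of_pos ht
        have H : p x * E x y * Real.log (1/M)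
              + (p x * E x y - p x * q y / M)
            ≤ p x * E x y * Real.log (E x y / q y) := by
          have h1 : Real.log (E x y / q y)
              = Real.log (E x y * M / q y) + Real.log (1/M) := by
            rw [← Real.log_mul (by positivity) (by positivity)]
            congr 1
            field_simp
          rw [h1, mul_add]
          have h2 := mul_le_mul_of_nonneg_left hlog
            (le_of_lt (mul_pos hpx hE))
          have h3 : p x * E x y * (1 - (E x y * M / q y)⁻¹)
              = p x * E x y - p x * q y / M := by
            field_simp
          linarith [h2, h3.symm.le, h3.le]
        simp only [Real.logb, if_pos hE]
        rw [mul_div_assoc', mul_div_assoc', ← add_div]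
        exact div_le_div_of_nonneg_right H hlog2.le
      · have hp' : p x = 0 := le_antisymm (not_lt.mp hpx) (hp0 x)
        simp [hp']
    · have hE' : E x y = 0 := le_antisymm (not_lt.mp hE) (hEpos x y)
      simp [hE', hE]
  -- sums
  have hsum1 : ∑ x, ∑ y, p x * E x y = 1 := by
    have : ∀ x, ∑ y, p x * E x y = p x := fun x => by
      rw [← Finset.mul_sum, hEsum, mul_one]
    simp_rw [this]; exact hp1
  have hqsum : ∑ y, q y = 1 := by
    simp_rw [hq]
    rw [Finset.sum_comm]
    have : ∀ x, ∑ y, E x y * p x = p x := fun x => by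
      rw [← Finset.sum_mul, hEsum, one_mul]
    simp_rw [this]; exact hp1
  have hgsum : ∑ x, ∑ y, (if 0 < E x y then p x * q y / M else 0) ≤ 1 := by
    rw [Finset.sum_comm]
    have hy : ∀ y, ∑ x, (if 0 < E x y then p x * q y / M else 0) ≤ q y := by
      intro y
      have heq : ∑ x, (if 0 < E x y then p x * q y / M else 0)
          = q y / M * S y := by
        rw [hS, Finset.mul_sum]
        apply Finset.sum_congr rfl
        intro x _
        split <;> ring
      rw [heq]
      calc q y / M * S y ≤ q y / M * M :=
            mul_le_mul_of_nonneg_left (hSle y) (div_nonneg (hq0 y) hM0.le)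
        _ = q y := div_mul_cancel₀ _ (ne_of_gt hM0)
    calc ∑ y, ∑ x, (if 0 < E x y then p x * q y / M else 0)
        ≤ ∑ y, q y := Finset.sum_le_sum fun y _ => hy y
      _ = 1 := hqsum
  have hgsum0 : 0 ≤ 1 - ∑ x, ∑ y, (if 0 < E x y then p x * q y / M else 0) := by
    linarith
  calc Real.logb 2 (1/M)
      = (∑ x, ∑ y, p x * E x y) * Real.logb 2 (1/M) := by rw [hsum1, one_mul]
    _ ≤ (∑ x, ∑ y, p x * E x y) * Real.logb 2 (1/M)
        + (1 - ∑ x, ∑ y, (if 0 < E x y then p x * q y / M else 0)) / Real.log 2 := by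
        have : 0 ≤ (1 - ∑ x, ∑ y, (if 0 < E x y then p x * q y / M else 0)) / Real.log 2 :=
          div_nonneg hgsum0 (le_of_lt hlog2)
        linarith
    _ = ∑ x, ∑ y, (p x * E x y * Real.logb 2 (1/M)
        + (p x * E x y - (if 0 < E x y then p x * q y / M else 0)) / Real.log 2) := by
        simp only [Finset.sum_add_distrib, Finset.sum_sub_distrib,
          Finset.sum_div, Finset.sum_mul, sub_div]
        simp_rw [← Finset.sum_div]
        rw [hsum1]
    _ ≤ ∑ x, ∑ y, p x * E x y * Real.logb 2 (E x y / q y) :=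
        Finset.sum_le_sum fun x _ => Finset.sum_le_sum fun y _ => key x y
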